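/- Let q ∈ (0,1) ∪ (1,2], λ_k ≥ 0 with ∑_k λ_k = 1, and probability vectors p^{(k)} in ℝ^d. Then (1/(1-q))·(1 − ∑_j (∑_k λ_k^q p^{(k)}_j)^{1/q}) ≤ ∑_k λ_k · (1/(1-q))·(1 − ∑_j (p^{(k)}_j)^{1/q}). That is, C_q^II(ρ) ≤ C_q^V(ρ). -/

import Mathlib

open Finset in
lemma aux_sum_rpow_le_rpow_sum {ι : Type*} (s : Finset ι) {r : ℝ} (hr : 1 ≤ r)
    (x : ι → ℝ) (hx : ∀ i ∈ s, 0 ≤ x i) :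
    ∑ i ∈ s, x i ^ r ≤ (∑ i ∈ s, x i) ^ r := by
  classical
  induction s using Finset.induction with
  | empty => simp [Real.zero_rpow (by positivity : r ≠ 0)]
  | insert a t hni ih =>
    have hxa : 0 ≤ x a := hx a (mem_insert_self _ _)
    have hxt : ∀ i ∈ t, 0 ≤ x i := fun i hi => hx i (mem_insert_of_mem hi)
    have hsum : 0 ≤ ∑ i ∈ t, x i := Finset.sum_nonneg hxt
    rw [Finset.sum_insert hni, Finset.sum_insert hni]
    calc x a ^ r + ∑ i ∈ t, x i ^ r ≤ x a ^ r + (∑ i ∈ t, x i) ^ r := by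
          gcongr; exact ih hxt
      _ ≤ (x a + ∑ i ∈ t, x i) ^ r := by
          have := NNReal.add_rpow_le_rpow_add (⟨x a, hxa⟩) (⟨∑ i ∈ t, x i, hsum⟩) hr
          have h2 := NNReal.coe_le_coe.2 this
          push_cast [NNReal.coe_rpow] at h2
          exact h2

open Finset in
lemma aux_rpow_sum_le_sum_rpow {ι : Type*} (s : Finset ι) {r : ℝ} (hr0 : 0 < r) (hr : r ≤ 1)
    (x : ι → ℝ) (hx : ∀ i ∈ s, 0 ≤ x i) :
    (∑ i ∈ s, x i) ^ r ≤ ∑ i ∈ s, x i ^ r := by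
  classical
  induction s using Finset.induction with
  | empty => simp [Real.zero_rpow (by positivity : r ≠ 0)]
  | insert a t hni ih =>
    have hxa : 0 ≤ x a := hx a (mem_insert_self _ _)
    have hxt : ∀ i ∈ t, 0 ≤ x i := fun i hi => hx i (mem_insert_of_mem hi)
    have hsum : 0 ≤ ∑ i ∈ t, x i := Finset.sum_nonneg hxt
    rw [Finset.sum_insert hni, Finset.sum_insert hni]
    calc (x a + ∑ i ∈ t, x i) ^ r ≤ x a ^ r + (∑ i ∈ t, x i) ^ r := by
          have := NNReal.rpow_add_le_add_rpow (⟨x a, hxa⟩) (⟨∑ i ∈ t, x i, hsum⟩) hr0.le hr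
          have h2 := NNReal.coe_le_coe.2 this
          push_cast [NNReal.coe_rpow] at h2
          exact h2
      _ ≤ x a ^ r + ∑ i ∈ t, x i ^ r := by
          gcongr; exact ih hxt

theorem tsallis_coherenceII_le_coherenceV (d m : ℕ) (q : ℝ)
    (hq : (0 < q ∧ q < 1) ∨ (1 < q ∧ q ≤ 2))
    (lam : Fin m → ℝ) (hl : ∀ k, 0 ≤ lam k) (hls : ∑ k, lam k = 1)
    (p : Fin m → Fin d → ℝ) (hp : ∀ k j, 0 ≤ p k j) (hps : ∀ k, ∑ j, p k j = 1) :
    (1 / (1 - q)) * (1 - ∑ j, (∑ k, (lam k) ^ q * p k j) ^ (1 / q))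
      ≤ ∑ k, lam k * ((1 / (1 - q)) * (1 - ∑ j, (p k j) ^ (1 / q))) := by
  have hq0 : 0 < q := by rcases hq with ⟨h, _⟩ | ⟨h, _⟩ <;> linarith
  have key : ∀ k j, ((lam k) ^ q * p k j) ^ (1 / q) = lam k * (p k j) ^ (1 / q) := by
    intro k j
    rw [Real.mul_rpow (Real.rpow_nonneg (hl k) q) (hp k j),
      ← Real.rpow_mul (hl k), mul_one_div_cancel (ne_of_gt hq0), Real.rpow_one]
  -- rewrite RHS
  have hrhs : ∑ k, lam k * ((1 / (1 - q)) * (1 - ∑ j, (p k j) ^ (1 / q)))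
      = (1 / (1 - q)) * (1 - ∑ j, ∑ k, lam k * (p k j) ^ (1 / q)) := by
    have h1 : ∀ k, lam k * ((1 / (1 - q)) * (1 - ∑ j, (p k j) ^ (1 / q)))
        = (1 / (1 - q)) * (lam k - ∑ j, lam k * (p k j) ^ (1 / q)) := by
      intro k
      rw [show lam k * ((1 / (1 - q)) * (1 - ∑ j, (p k j) ^ (1 / q)))
          = (1 / (1 - q)) * (lam k - lam k * ∑ j, (p k j) ^ (1 / q)) by ring, Finset.mul_sum]
    simp_rw [h1]
    rw [← Finset.mul_sum, Finset.sum_sub_distrib, hls, Finset.sum_comm]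
  rw [hrhs]
  rcases hq with ⟨hq0', hq1⟩ | ⟨hq1, hq2⟩
  · -- q < 1 : 1/(1-q) > 0, need ∑_j ∑_k lam k * p^r ≤ ∑_j (∑_k lam^q p)^r
    have h1q : (0:ℝ) < 1 - q := by linarith
    have hc : (0:ℝ) < 1 / (1 - q) := by positivity
    have hmain : ∑ j, ∑ k, lam k * (p k j) ^ (1 / q)
        ≤ ∑ j, (∑ k, (lam k) ^ q * p k j) ^ (1 / q) := by
      apply Finset.sum_le_sum
      intro j _
      calc ∑ k, lam k * (p k j) ^ (1 / q) = ∑ k, ((lam k) ^ q * p k j) ^ (1 / q) := by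
            simp_rw [key]
        _ ≤ (∑ k, (lam k) ^ q * p k j) ^ (1 / q) :=
            aux_sum_rpow_le_rpow_sum _ (by rw [le_div_iff₀ hq0]; linarith) _
              (fun k _ => mul_nonneg (Real.rpow_nonneg (hl k) q) (hp k j))
    nlinarith [hmain, hc]
  · -- q > 1 : 1/(1-q) < 0, need ∑_j (∑_k lam^q p)^r ≤ ∑_j ∑_k lam k * p^r
    have hc : 1 / (1 - q) < 0 := by
      apply div_neg_of_pos_of_neg one_pos; linarith
    have hmain : ∑ j, (∑ k, (lam k) ^ q * p k j) ^ (1 / q)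
        ≤ ∑ j, ∑ k, lam k * (p k j) ^ (1 / q) := by
      apply Finset.sum_le_sum
      intro j _
      calc (∑ k, (lam k) ^ q * p k j) ^ (1 / q)
          ≤ ∑ k, ((lam k) ^ q * p k j) ^ (1 / q) :=
            aux_rpow_sum_le_sum_rpow _ (by positivity) (by rw [div_le_one hq0]; linarith) _
              (fun k _ => mul_nonneg (Real.rpow_nonneg (hl k) q) (hp k j))
        _ = ∑ k, lam k * (p k j) ^ (1 / q) := by simp_rw [key]
    nlinarith [hmain, hc]
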